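/- Let (S, I) be a traveling wave profile with speed c > 0 such that 0 < S(ξ) < S₀ and I(ξ) > 0 for all ξ ∈ ℝ, and let (S*, I*) be an endemic equilibrium. Define g(x) := x − 1 − ln x for x > 0 and L(ξ) := c·S*·g(S(ξ)/S*) + c·I*·g(I(ξ)/I*) + d₁·S*·(∫₀¹ g(S(ξ−θ)/S*) dθ − ∫_{−1}⁰ g(S(ξ−θ)/S*) dθ) + d₂·I*·(∫₀¹ g(I(ξ−θ)/I*) dθ − ∫_{−1}⁰ g(I(ξ−θ)/I*) dθ). Then L is nonincreasing on ℝ, i.e. L(ξ₂) ≤ L(ξ₁) whenever ξ₁ ≤ ξ₂. -/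

import Mathlib

open Real Filter MeasureTheory

lemma lyap_key (d₁ d₂ Λ β μ₁ μ₂ Sp Sm Sc Ip Im Ic Ss Is fc fs : ℝ)
    (hd₁ : 0 < d₁) (hd₂ : 0 < d₂) (hβ : 0 < β) (hμ₁ : 0 < μ₁)
    (hSp : 0 < Sp) (hSm : 0 < Sm) (hSc : 0 < Sc)
    (hIp : 0 < Ip) (hIm : 0 < Im) (hIc : 0 < Ic)
    (hSs : 0 < Ss) (hIs : 0 < Is) (hfc : 0 < fc) (hfs : 0 < fs)
    (hFy : (fc / fs - Ic / Is) * (fc / fs - 1) ≤ 0)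
    (heq1 : Λ - β * Ss * fs - μ₁ * Ss = 0) (heq2 : β * Ss * fs - μ₂ * Is = 0) :
    (1 - Ss / Sc) * (d₁ * (Sp + Sm - 2 * Sc) + Λ - μ₁ * Sc - β * Sc * fc)
      + (1 - Is / Ic) * (d₂ * (Ip + Im - 2 * Ic) + β * Sc * fc - μ₂ * Ic)
      + d₁ * Ss * (2 * (Sc / Ss - 1 - (Real.log Sc - Real.log Ss))
          - (Sm / Ss - 1 - (Real.log Sm - Real.log Ss))
          - (Sp / Ss - 1 - (Real.log Sp - Real.log Ss)))
      + d₂ * Is * (2 * (Ic / Is - 1 - (Real.log Ic - Real.log Is))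
          - (Im / Is - 1 - (Real.log Im - Real.log Is))
          - (Ip / Is - 1 - (Real.log Ip - Real.log Is))) ≤ 0 := by
  have hΛ : Λ = β * Ss * fs + μ₁ * Ss := by linarith
  have hμ₂ : μ₂ = β * Ss * fs / Is := by field_simp; linarith
  subst hΛ hμ₂
  have lb : ∀ u v : ℝ, 0 < u → 0 < v → Real.log u - Real.log v ≤ u / v - 1 := by
    intro u v hu hv
    have h := Real.log_le_sub_one_of_pos (div_pos hu hv)
    rwa [Real.log_div hu.ne' hv.ne'] at h
  have hb1 := lb Sm Sc hSm hSc
  have hb2 := lb Sp Sc hSp hSc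
  have hb3 := lb Im Ic hIm hIc
  have hb4 := lb Ip Ic hIp hIc
  have hb5 := lb Ss Sc hSs hSc
  have hb6 : Real.log Sc + Real.log fc + Real.log Is
      - (Real.log Ss + Real.log fs + Real.log Ic)
      ≤ Sc * fc * Is / (Ss * fs * Ic) - 1 := by
    have h := lb (Sc * fc * Is) (Ss * fs * Ic) (by positivity) (by positivity)
    rw [Real.log_mul (by positivity) hIs.ne', Real.log_mul hSc.ne' hfc.ne',
      Real.log_mul (by positivity) hIc.ne', Real.log_mul hSs.ne' hfs.ne'] at h
    linarith
  have hb7 : Real.log Ic + Real.log fs - (Real.log Is + Real.log fc)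
      ≤ Ic * fs / (Is * fc) - 1 := by
    have h := lb (Ic * fs) (Is * fc) (by positivity) (by positivity)
    rw [Real.log_mul hIc.ne' hfs.ne', Real.log_mul hIs.ne' hfc.ne'] at h
    linarith
  have m1 : d₁ * Ss * (((Real.log Sm - Real.log Sc) + (Real.log Sp - Real.log Sc))
      - ((Sm / Sc - 1) + (Sp / Sc - 1))) ≤ 0 :=
    mul_nonpos_of_nonneg_of_nonpos (by positivity) (by linarith)
  have m2 : d₂ * Is * (((Real.log Im - Real.log Ic) + (Real.log Ip - Real.log Ic))
      - ((Im / Ic - 1) + (Ip / Ic - 1))) ≤ 0 :=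
    mul_nonpos_of_nonneg_of_nonpos (by positivity) (by linarith)
  have m3 : β * Ss * fs * (3 - (Ss / Sc + Sc * fc * Is / (Ss * fs * Ic) + Ic * fs / (Is * fc))) ≤ 0 :=
    mul_nonpos_of_nonneg_of_nonpos (by positivity) (by linarith)
  have m4 : β * Ss * fs * ((fc / fs - Ic / Is) * (fc / fs - 1) / (fc / fs)) ≤ 0 :=
    mul_nonpos_of_nonneg_of_nonpos (by positivity)
      (div_nonpos_of_nonpos_of_nonneg hFy (by positivity))
  have m5 : (0:ℝ) ≤ μ₁ * (Sc - Ss) ^ 2 / Sc := by positivity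
  have hid : (1 - Ss / Sc) * (d₁ * (Sp + Sm - 2 * Sc) + (β * Ss * fs + μ₁ * Ss) - μ₁ * Sc - β * Sc * fc)
      + (1 - Is / Ic) * (d₂ * (Ip + Im - 2 * Ic) + β * Sc * fc - β * Ss * fs / Is * Ic)
      + d₁ * Ss * (2 * (Sc / Ss - 1 - (Real.log Sc - Real.log Ss))
          - (Sm / Ss - 1 - (Real.log Sm - Real.log Ss))
          - (Sp / Ss - 1 - (Real.log Sp - Real.log Ss)))
      + d₂ * Is * (2 * (Ic / Is - 1 - (Real.log Ic - Real.log Is))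
          - (Im / Is - 1 - (Real.log Im - Real.log Is))
          - (Ip / Is - 1 - (Real.log Ip - Real.log Is)))
      = -(μ₁ * (Sc - Ss) ^ 2 / Sc)
        + β * Ss * fs * (3 - (Ss / Sc + Sc * fc * Is / (Ss * fs * Ic) + Ic * fs / (Is * fc)))
        + β * Ss * fs * ((fc / fs - Ic / Is) * (fc / fs - 1) / (fc / fs))
        + d₁ * Ss * (((Real.log Sm - Real.log Sc) + (Real.log Sp - Real.log Sc))
            - ((Sm / Sc - 1) + (Sp / Sc - 1)))
        + d₂ * Is * (((Real.log Im - Real.log Ic) + (Real.log Ip - Real.log Ic))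
            - ((Im / Ic - 1) + (Ip / Ic - 1))) := by
    field_simp
    ring
  linarith [hid, m1, m2, m3, m4, m5]

/-- **Monotonicity of the Lyapunov functional** (Step 4 of the proof of
Theorem 3.1).  Let `(S, I)` be a traveling wave profile with speed `c > 0`,
`0 < S < S₀`, `I > 0`, and let `(S*, I*)` be an endemic equilibrium.  With
`g(x) = x − 1 − ln x`, the Lyapunov functional
`L(ξ) = cS*g(S/S*) + cI*g(I/I*) + d₁S*W₂(ξ) + d₂I*W₃(ξ)` is nonincreasing. -/
theorem lyapunov_nonincreasing
    (d₁ d₂ Λ β μ₁ μ₂ : ℝ) (hd₁ : 0 < d₁) (hd₂ : 0 < d₂) (hΛ : 0 < Λ)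
    (hβ : 0 < β) (hμ₁ : 0 < μ₁) (hμ₂ : 0 < μ₂)
    (f : ℝ → ℝ) (hf0 : f 0 = 0) (hfC1 : ContDiff ℝ 1 f)
    (hf' : ∀ I : ℝ, 0 ≤ I → 0 < deriv f I)
    (hfratio : ∀ I J : ℝ, 0 < I → I ≤ J → f J / J ≤ f I / I)
    (c : ℝ) (hc : 0 < c)
    (S I : ℝ → ℝ) (hS : ContDiff ℝ 1 S) (hI : ContDiff ℝ 1 I)
    (hSeq : ∀ ξ : ℝ, c * deriv S ξ =
      d₁ * (S (ξ + 1) + S (ξ - 1) - 2 * S ξ) + Λ - μ₁ * S ξ - β * S ξ * f (I ξ))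
    (hIeq : ∀ ξ : ℝ, c * deriv I ξ =
      d₂ * (I (ξ + 1) + I (ξ - 1) - 2 * I ξ) + β * S ξ * f (I ξ) - μ₂ * I ξ)
    (hSbd : ∀ ξ : ℝ, 0 < S ξ ∧ S ξ < Λ / μ₁) (hIpos : ∀ ξ : ℝ, 0 < I ξ)
    (Sstar Istar : ℝ) (hSstar : 0 < Sstar) (hIstar : 0 < Istar)
    (heq1 : Λ - β * Sstar * f Istar - μ₁ * Sstar = 0)
    (heq2 : β * Sstar * f Istar - μ₂ * Istar = 0)
    (g : ℝ → ℝ) (hg : ∀ x : ℝ, g x = x - 1 - Real.log x)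
    (L : ℝ → ℝ)
    (hL : ∀ ξ : ℝ, L ξ =
      c * Sstar * g (S ξ / Sstar) + c * Istar * g (I ξ / Istar)
        + d₁ * Sstar * ((∫ θ in (0:ℝ)..1, g (S (ξ - θ) / Sstar))
            - ∫ θ in (-1:ℝ)..0, g (S (ξ - θ) / Sstar))
        + d₂ * Istar * ((∫ θ in (0:ℝ)..1, g (I (ξ - θ) / Istar))
            - ∫ θ in (-1:ℝ)..0, g (I (ξ - θ) / Istar))) :
    ∀ ξ₁ ξ₂ : ℝ, ξ₁ ≤ ξ₂ → L ξ₂ ≤ L ξ₁ := by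
  intro ξ₁ ξ₂ h12
  have hSpos : ∀ ξ, 0 < S ξ := fun ξ => (hSbd ξ).1
  -- monotonicity and positivity of f
  have hfmono : StrictMonoOn f (Set.Ici (0:ℝ)) := by
    apply strictMonoOn_of_deriv_pos (convex_Ici 0) hfC1.continuous.continuousOn
    intro x hx
    rw [interior_Ici] at hx
    exact hf' x (le_of_lt hx)
  have hfsI : 0 < f Istar := by
    have := hfmono Set.self_mem_Ici (Set.mem_Ici.2 hIstar.le) hIstar
    rwa [hf0] at this
  have hfcpos : ∀ ξ, 0 < f (I ξ) := fun ξ => by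
    have := hfmono Set.self_mem_Ici (Set.mem_Ici.2 (hIpos ξ).le) (hIpos ξ)
    rwa [hf0] at this
  have hFy : ∀ ξ, (f (I ξ) / f Istar - I ξ / Istar) * (f (I ξ) / f Istar - 1) ≤ 0 := by
    intro ξ
    rcases le_total (I ξ) Istar with h | h
    · have h1 : f (I ξ) ≤ f Istar :=
        hfmono.monotoneOn (Set.mem_Ici.2 (hIpos ξ).le) (Set.mem_Ici.2 hIstar.le) h
      have h2 := hfratio (I ξ) Istar (hIpos ξ) h
      have h3 : I ξ / Istar ≤ f (I ξ) / f Istar := by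
        rw [div_le_div_iff₀ hIstar hfsI]
        rw [div_le_div_iff₀ hIstar (hIpos ξ)] at h2
        linarith [h2]
      have h4 : f (I ξ) / f Istar ≤ 1 := by
        rw [div_le_one hfsI]; exact h1
      exact mul_nonpos_of_nonneg_of_nonpos (by linarith) (by linarith)
    · have h1 : f Istar ≤ f (I ξ) :=
        hfmono.monotoneOn (Set.mem_Ici.2 hIstar.le) (Set.mem_Ici.2 (hIpos ξ).le) h
      have h2 := hfratio Istar (I ξ) hIstar h
      have h3 : f (I ξ) / f Istar ≤ I ξ / Istar := by
        rw [div_le_div_iff₀ hfsI hIstar]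
        rw [div_le_div_iff₀ (hIpos ξ) hIstar] at h2
        linarith [h2]
      have h4 : 1 ≤ f (I ξ) / f Istar := by
        rw [le_div_iff₀ hfsI]; linarith
      exact mul_nonpos_of_nonpos_of_nonneg (by linarith) (by linarith)
  -- the integrand functions
  set φS : ℝ → ℝ := fun u => S u / Sstar - 1 - (Real.log (S u) - Real.log Sstar) with hφS
  set φI : ℝ → ℝ := fun u => I u / Istar - 1 - (Real.log (I u) - Real.log Istar) with hφI
  have hgS : ∀ u : ℝ, g (S u / Sstar) = φS u := by
    intro u
    rw [hg, hφS]
    simp only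
    rw [Real.log_div (hSpos u).ne' hSstar.ne']
  have hgI : ∀ u : ℝ, g (I u / Istar) = φI u := by
    intro u
    rw [hg, hφI]
    simp only
    rw [Real.log_div (hIpos u).ne' hIstar.ne']
  have hφScont : Continuous φS :=
    ((hS.continuous.div_const _).sub continuous_const).sub
      ((hS.continuous.log fun u => (hSpos u).ne').sub continuous_const)
  have hφIcont : Continuous φI :=
    ((hI.continuous.div_const _).sub continuous_const).sub
      ((hI.continuous.log fun u => (hIpos u).ne').sub continuous_const)
  set ΦS : ℝ → ℝ := fun x => ∫ t in (0:ℝ)..x, φS t with hΦS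
  set ΦI : ℝ → ℝ := fun x => ∫ t in (0:ℝ)..x, φI t with hΦI
  have hΦS' : ∀ x, HasDerivAt ΦS (φS x) x := fun x =>
    (hφScont.integral_hasStrictDerivAt 0 x).hasDerivAt
  have hΦI' : ∀ x, HasDerivAt ΦI (φI x) x := fun x =>
    (hφIcont.integral_hasStrictDerivAt 0 x).hasDerivAt
  -- rewriting the integrals
  have hshift : ∀ (φ : ℝ → ℝ), Continuous φ → ∀ ξ : ℝ,
      ((∫ θ in (0:ℝ)..1, φ (ξ - θ)) = (∫ t in (0:ℝ)..ξ, φ t) - ∫ t in (0:ℝ)..(ξ - 1), φ t)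
      ∧ ((∫ θ in (-1:ℝ)..0, φ (ξ - θ)) = (∫ t in (0:ℝ)..(ξ + 1), φ t) - ∫ t in (0:ℝ)..ξ, φ t) := by
    intro φ hφ ξ
    constructor
    · rw [intervalIntegral.integral_comp_sub_left φ ξ, sub_zero, eq_sub_iff_add_eq, add_comm]
      exact intervalIntegral.integral_add_adjacent_intervals
        (hφ.intervalIntegrable _ _) (hφ.intervalIntegrable _ _)
    · rw [intervalIntegral.integral_comp_sub_left φ ξ, sub_zero, sub_neg_eq_add,
        eq_sub_iff_add_eq, add_comm]
      exact intervalIntegral.integral_add_adjacent_intervals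
        (hφ.intervalIntegrable _ _) (hφ.intervalIntegrable _ _)
  -- the reformulated Lyapunov functional
  set M : ℝ → ℝ := fun ξ => c * Sstar * φS ξ + c * Istar * φI ξ
      + d₁ * Sstar * (2 * ΦS ξ - ΦS (ξ - 1) - ΦS (ξ + 1))
      + d₂ * Istar * (2 * ΦI ξ - ΦI (ξ - 1) - ΦI (ξ + 1)) with hM
  have hLM : ∀ ξ, L ξ = M ξ := by
    intro ξ
    have e1 : (∫ θ in (0:ℝ)..1, g (S (ξ - θ) / Sstar)) = ∫ θ in (0:ℝ)..1, φS (ξ - θ) := by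
      simp only [hgS]
    have e2 : (∫ θ in (-1:ℝ)..0, g (S (ξ - θ) / Sstar)) = ∫ θ in (-1:ℝ)..0, φS (ξ - θ) := by
      simp only [hgS]
    have e3 : (∫ θ in (0:ℝ)..1, g (I (ξ - θ) / Istar)) = ∫ θ in (0:ℝ)..1, φI (ξ - θ) := by
      simp only [hgI]
    have e4 : (∫ θ in (-1:ℝ)..0, g (I (ξ - θ) / Istar)) = ∫ θ in (-1:ℝ)..0, φI (ξ - θ) := by
      simp only [hgI]
    rw [hL, hM, hgS ξ, hgI ξ, e1, e2, e3, e4,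
      (hshift φS hφScont ξ).1, (hshift φS hφScont ξ).2,
      (hshift φI hφIcont ξ).1, (hshift φI hφIcont ξ).2]
    simp only [hΦS, hΦI]
    ring
  -- derivative of M
  have hSd : ∀ ξ, HasDerivAt S (deriv S ξ) ξ := fun ξ =>
    (hS.differentiable one_ne_zero ξ).hasDerivAt
  have hId : ∀ ξ, HasDerivAt I (deriv I ξ) ξ := fun ξ =>
    (hI.differentiable one_ne_zero ξ).hasDerivAt
  have hφSd : ∀ ξ, HasDerivAt φS (deriv S ξ / Sstar - (S ξ)⁻¹ * deriv S ξ) ξ := by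
    intro ξ
    have h1 : HasDerivAt (fun u => Real.log (S u)) ((S ξ)⁻¹ * deriv S ξ) ξ :=
      (Real.hasDerivAt_log (hSpos ξ).ne').comp ξ (hSd ξ)
    exact (((hSd ξ).div_const Sstar).sub_const 1).sub (h1.sub_const (Real.log Sstar))
  have hφId : ∀ ξ, HasDerivAt φI (deriv I ξ / Istar - (I ξ)⁻¹ * deriv I ξ) ξ := by
    intro ξ
    have h1 : HasDerivAt (fun u => Real.log (I u)) ((I ξ)⁻¹ * deriv I ξ) ξ :=
      (Real.hasDerivAt_log (hIpos ξ).ne').comp ξ (hId ξ)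
    exact (((hId ξ).div_const Istar).sub_const 1).sub (h1.sub_const (Real.log Istar))
  have hΦSm : ∀ ξ : ℝ, HasDerivAt (fun x => ΦS (x - 1)) (φS (ξ - 1)) ξ := by
    intro ξ
    have := (hΦS' (ξ - 1)).comp ξ ((hasDerivAt_id ξ).sub_const 1)
    simpa [Function.comp_def] using this
  have hΦSp : ∀ ξ : ℝ, HasDerivAt (fun x => ΦS (x + 1)) (φS (ξ + 1)) ξ := by
    intro ξ
    have := (hΦS' (ξ + 1)).comp ξ ((hasDerivAt_id ξ).add_const 1)
    simpa [Function.comp_def] using this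
  have hΦIm : ∀ ξ : ℝ, HasDerivAt (fun x => ΦI (x - 1)) (φI (ξ - 1)) ξ := by
    intro ξ
    have := (hΦI' (ξ - 1)).comp ξ ((hasDerivAt_id ξ).sub_const 1)
    simpa [Function.comp_def] using this
  have hΦIp : ∀ ξ : ℝ, HasDerivAt (fun x => ΦI (x + 1)) (φI (ξ + 1)) ξ := by
    intro ξ
    have := (hΦI' (ξ + 1)).comp ξ ((hasDerivAt_id ξ).add_const 1)
    simpa [Function.comp_def] using this
  set E : ℝ → ℝ := fun ξ =>
      c * Sstar * (deriv S ξ / Sstar - (S ξ)⁻¹ * deriv S ξ)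
      + c * Istar * (deriv I ξ / Istar - (I ξ)⁻¹ * deriv I ξ)
      + d₁ * Sstar * (2 * φS ξ - φS (ξ - 1) - φS (ξ + 1))
      + d₂ * Istar * (2 * φI ξ - φI (ξ - 1) - φI (ξ + 1)) with hE
  have hMd : ∀ ξ, HasDerivAt M (E ξ) ξ := by
    intro ξ
    have h1 := ((hφSd ξ).const_mul (c * Sstar)).add ((hφId ξ).const_mul (c * Istar))
    have h2 := (((hΦS' ξ).const_mul 2).sub (hΦSm ξ)).sub (hΦSp ξ)
    have h3 := (((hΦI' ξ).const_mul 2).sub (hΦIm ξ)).sub (hΦIp ξ)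
    exact (h1.add (h2.const_mul (d₁ * Sstar))).add (h3.const_mul (d₂ * Istar))
  have hEle : ∀ ξ, E ξ ≤ 0 := by
    intro ξ
    have e1 : c * Sstar * (deriv S ξ / Sstar - (S ξ)⁻¹ * deriv S ξ)
        = (1 - Sstar / S ξ) * (c * deriv S ξ) := by
      field_simp
    have e2 : c * Istar * (deriv I ξ / Istar - (I ξ)⁻¹ * deriv I ξ)
        = (1 - Istar / I ξ) * (c * deriv I ξ) := by
      field_simp
    rw [hE]
    simp only
    rw [e1, e2, hSeq ξ, hIeq ξ, hφS]
    simp only [hφI]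
    exact lyap_key d₁ d₂ Λ β μ₁ μ₂ (S (ξ+1)) (S (ξ-1)) (S ξ) (I (ξ+1)) (I (ξ-1)) (I ξ)
      Sstar Istar (f (I ξ)) (f Istar) hd₁ hd₂ hβ hμ₁ (hSpos _) (hSpos _) (hSpos _)
      (hIpos _) (hIpos _) (hIpos _) hSstar hIstar (hfcpos ξ) hfsI (hFy ξ) heq1 heq2
  have hanti : Antitone M := antitone_of_hasDerivAt_nonpos hMd hEle
  rw [hLM ξ₁, hLM ξ₂]
  exact hanti h12
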